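/- Let C₂ ⊊ C₁ ⊆ F^n be linear codes over a finite field F with dim C₁ − dim C₂ = ℓ ≥ 1. For 1 ≤ t ≤ ℓ define the t-th relative generalized Hamming weight M_t(C₁, C₂) = min{#Supp(D) : D a subspace of C₁, D ∩ C₂ = {0}, dim D = t}, where Supp(D) = {i : ∃ v ∈ D, v_i ≠ 0}. Then M_t(C₁, C₂) is well-defined (the minimizing set is nonempty) and the sequence is strictly increasing: M_1(C₁,C₂) < M_2(C₁,C₂) < ⋯ < M_ℓ(C₁,C₂). -/
import Mathlib

open Module Submodule

def codeSupp {n : ℕ} {F : Type} [Field F] (D : Submodule F (Fin n → F)) :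
    Set (Fin n) := {i | ∃ v ∈ D, v i ≠ 0}

lemma exists_witness {n : ℕ} {F : Type} [Field F]
    (C₁ C₂ : Submodule F (Fin n → F)) (hsub : C₂ ≤ C₁) (t : ℕ)
    (ht : t + Module.finrank F C₂ ≤ Module.finrank F C₁) :
    ∃ D : Submodule F (Fin n → F), D ≤ C₁ ∧ D ⊓ C₂ = ⊥ ∧ Module.finrank F D = t := by
  induction t with
  | zero => exact ⟨⊥, bot_le, bot_inf_eq C₂, finrank_bot F _⟩
  | succ t ih =>
    obtain ⟨D, hD1, hD2, hD3⟩ := ih (by omega)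
    have hsupfin : Module.finrank F ↥(D ⊔ C₂) = t + Module.finrank F C₂ := by
      have h := Submodule.finrank_sup_add_finrank_inf_eq D C₂
      rw [hD2] at h
      simp only [finrank_bot, add_zero] at h
      omega
    have hlt : D ⊔ C₂ < C₁ := by
      refine (sup_le hD1 hsub).lt_of_ne ?_
      intro hEq
      rw [hEq] at hsupfin
      omega
    obtain ⟨x, hxC₁, hx⟩ := SetLike.exists_of_lt hlt
    have hx0 : x ≠ 0 := by rintro rfl; exact hx (Submodule.zero_mem _)
    have hxD : x ∉ D := fun h => hx (Submodule.mem_sup_left h)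
    have hinf : D ⊓ (F ∙ x) = ⊥ := by
      rw [eq_bot_iff]
      rintro y ⟨hyD, hySpan⟩
      obtain ⟨a, rfl⟩ := Submodule.mem_span_singleton.mp hySpan
      rcases eq_or_ne a 0 with rfl | ha
      · simpa using (zero_smul F x) ▸ rfl
      · exact absurd ((Submodule.smul_mem_iff _ ha).mp hyD) hxD
    refine ⟨D ⊔ F ∙ x, sup_le hD1 ((Submodule.span_singleton_le_iff_mem x C₁).mpr hxC₁), ?_, ?_⟩
    · rw [eq_bot_iff]
      rintro y ⟨hyD', hyC₂⟩
      obtain ⟨d, hd, z, hz, rfl⟩ := Submodule.mem_sup.mp hyD'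
      obtain ⟨a, rfl⟩ := Submodule.mem_span_singleton.mp hz
      rcases eq_or_ne a 0 with rfl | ha
      · simp only [zero_smul, add_zero] at hyC₂ ⊢
        have : d ∈ D ⊓ C₂ := ⟨hd, hyC₂⟩
        rw [hD2] at this; exact this
      · exfalso
        apply hx
        have : x = a⁻¹ • ((d + a • x) - d) := by
          rw [add_sub_cancel_left, smul_smul, inv_mul_cancel₀ ha, one_smul]
        rw [this]
        exact Submodule.smul_mem _ _ (Submodule.sub_mem _
          (Submodule.mem_sup_right hyC₂) (Submodule.mem_sup_left hd))
    · have h := Submodule.finrank_sup_add_finrank_inf_eq D (F ∙ x)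
      rw [hinf, finrank_span_singleton hx0] at h
      simp only [finrank_bot, add_zero] at h
      omega

lemma step_down {n : ℕ} {F : Type} [Field F] (D : Submodule F (Fin n → F)) {t : ℕ}
    (hD : Module.finrank F D = t + 1) :
    ∃ D' : Submodule F (Fin n → F), D' ≤ D ∧ Module.finrank F D' = t ∧
      codeSupp D' ⊂ codeSupp D := by
  have hDne : D ≠ ⊥ := by
    intro h
    rw [h, finrank_bot] at hD
    omega
  obtain ⟨v, hvD, hv0⟩ := Submodule.exists_mem_ne_zero_of_ne_bot hDne
  obtain ⟨i, hvi⟩ := Function.ne_iff.mp hv0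
  simp only [Pi.zero_apply] at hvi
  set φ : D →ₗ[F] F := (LinearMap.proj i).comp D.subtype with hφ
  have hrange : Module.finrank F (LinearMap.range φ) = 1 := by
    have h1 : LinearMap.range φ ≠ ⊥ := by
      intro h
      have : φ ⟨v, hvD⟩ = 0 := by
        have := LinearMap.mem_range_self φ ⟨v, hvD⟩
        rw [h] at this
        simpa using this
      exact hvi this
    have hle : Module.finrank F (LinearMap.range φ) ≤ 1 := by
      simpa [Module.finrank_self] using (LinearMap.range φ).finrank_le
    have hpos : Module.finrank F (LinearMap.range φ) ≠ 0 := fun h =>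
      h1 (Submodule.finrank_eq_zero.mp h)
    omega
  have hker : Module.finrank F (LinearMap.ker φ) = t := by
    have := LinearMap.finrank_range_add_finrank_ker φ
    rw [hD, hrange] at this
    omega
  refine ⟨Submodule.map D.subtype (LinearMap.ker φ), Submodule.map_subtype_le _ _, ?_, ?_, ?_⟩
  · rw [Submodule.finrank_map_subtype_eq, hker]
  · rintro j ⟨w, hw, hwj⟩
    obtain ⟨u, _, rfl⟩ := hw
    exact ⟨u, u.2, hwj⟩
  · intro hsub
    have hi : i ∈ codeSupp D := ⟨v, hvD, hvi⟩
    obtain ⟨w, hw, hwi⟩ := hsub hi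
    obtain ⟨u, hu, rfl⟩ := hw
    exact hwi (by simpa [φ, LinearMap.mem_ker] using hu)

def rghwSet {n : ℕ} {F : Type} [Field F]
    (C₁ C₂ : Submodule F (Fin n → F)) (t : ℕ) : Set ℕ :=
  {m | ∃ D : Submodule F (Fin n → F),
    D ≤ C₁ ∧ D ⊓ C₂ = ⊥ ∧ Module.finrank F D = t ∧ (codeSupp D).ncard = m}

theorem rghw_well_defined_and_strict_mono
    (F : Type) [Field F] [Fintype F] (n ℓ : ℕ) (hℓ : 1 ≤ ℓ)
    (C₁ C₂ : Submodule F (Fin n → F)) (hsub : C₂ ≤ C₁) (hne : C₂ ≠ C₁)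
    (hdim : Module.finrank F C₁ - Module.finrank F C₂ = ℓ) :
    (∀ t, 1 ≤ t → t ≤ ℓ → (rghwSet C₁ C₂ t).Nonempty) ∧
    (∀ t, 1 ≤ t → t + 1 ≤ ℓ →
      sInf (rghwSet C₁ C₂ t) < sInf (rghwSet C₁ C₂ (t + 1))) := by
  have hmono : Module.finrank F C₂ ≤ Module.finrank F C₁ := Submodule.finrank_mono hsub
  have key : ∀ t, t ≤ ℓ → (rghwSet C₁ C₂ t).Nonempty := by
    intro t ht
    obtain ⟨D, h1, h2, h3⟩ := exists_witness C₁ C₂ hsub t (by omega)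
    exact ⟨(codeSupp D).ncard, D, h1, h2, h3, rfl⟩
  refine ⟨fun t _ ht => key t ht, fun t ht1 ht2 => ?_⟩
  obtain ⟨D, hD1, hD2, hD3, hD4⟩ := Nat.sInf_mem (key (t + 1) ht2)
  obtain ⟨D', hle, hfr, hss⟩ := step_down D hD3
  have hD'2 : D' ⊓ C₂ = ⊥ :=
    le_bot_iff.mp (hD2 ▸ inf_le_inf_right C₂ hle)
  have h1 : sInf (rghwSet C₁ C₂ t) ≤ (codeSupp D').ncard :=
    Nat.sInf_le ⟨D', hle.trans hD1, hD'2, hfr, rfl⟩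
  have h2 : (codeSupp D').ncard < (codeSupp D).ncard :=
    Set.ncard_lt_ncard hss (Set.toFinite _)
  omega
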